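/- For every n ∈ ℕ with n ≥ 7, the line-rotating Turning Machine L⁶_n has a reachable configuration that is permanently blocked; consequently L⁶_n does not compute its target configuration (a full 2π line rotation is impossible). -/

import Mathlib

namespace TuringMachineFolding

/-- Points of the triangular grid, coordinatised by `ℤ × ℤ`. -/
abbrev Pt : Type := ℤ × ℤ

/-- The six triangular-grid unit vectors `x, y, w, -x, -y, -w`. -/
def unitVecs : Set Pt :=
  {((1 : ℤ), (0 : ℤ)), (0, 1), (-1, 1), (-1, 0), (0, -1), (1, -1)}

/-- Anticlockwise rotation by `π/3`: the linear map with `ρ(1,0) = (0,1)`, `ρ(0,1) = (-1,1)`. -/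
def rot : Pt → Pt := fun p => (-p.2, p.1 + p.2)

/-- Clockwise rotation by `π/3`, the inverse of `rot`. -/
def rotInv : Pt → Pt := fun p => (p.1 + p.2, -p.1)

/-- `rot` as a permutation of the grid, so that integer powers `rotE ^ t` make sense. -/
def rotE : Equiv.Perm Pt where
  toFun := rot
  invFun := rotInv
  left_inv := by
    rintro ⟨a, b⟩
    simp only [rot, rotInv, Prod.mk.injEq]
    constructor <;> ring
  right_inv := by
    rintro ⟨a, b⟩
    simp only [rot, rotInv, Prod.mk.injEq]
    constructor <;> ring

/-- Scalar multiple of a grid vector. -/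
def zsmulPt (m : ℤ) (p : Pt) : Pt := (m * p.1, m * p.2)

/-- A configuration of a Turning Machine of length `n`: states and positions of the monomers
`m_0, …, m_{n-1}` (indices `≥ n` carry irrelevant junk values), such that `pos m_0 = (0,0)`,
consecutive positions differ by one of the six unit vectors, and positions are pairwise
distinct. -/
structure Config (n : ℕ) where
  st : ℕ → ℤ
  pos : ℕ → Pt
  pos_zero : pos 0 = (0, 0)
  step_unit : ∀ i, i + 1 < n → pos (i + 1) - pos i ∈ unitVecs
  pos_inj : ∀ i < n, ∀ j < n, pos i = pos j → i = j

/-- The direction of monomer `m_i` (meaningful for `i + 1 < n`). -/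
def dir {n : ℕ} (c : Config n) (i : ℕ) : Pt := c.pos (i + 1) - c.pos i

/-- The translation vector applied to the head of `m_i` when the turning rule fires at `m_i`:
`ρ²(d_i)` for a positive state, `ρ⁻²(d_i)` for a negative state. -/
def delta {n : ℕ} (c : Config n) (i : ℕ) : Pt :=
  if 0 < c.st i then rot (rot (dir c i)) else rotInv (rotInv (dir c i))

/-- The state sequence after applying the turning rule at monomer `i`. -/
def nextSt {n : ℕ} (c : Config n) (i : ℕ) : ℕ → ℤ := fun j =>
  if j = i then (if 0 < c.st i then c.st i - 1 else c.st i + 1) else c.st j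

/-- The position sequence after applying the turning rule at monomer `i`. -/
def nextPos {n : ℕ} (c : Config n) (i : ℕ) : ℕ → Pt := fun j =>
  if i < j then c.pos j + delta c i else c.pos j

/-- The turning rule applied at monomer `i` transforms `c` into `c'`.  The requirement that
`c'` is again a `Config` (pairwise distinct positions) encodes that the move is not blocked. -/
def StepAt {n : ℕ} (c : Config n) (i : ℕ) (c' : Config n) : Prop :=
  i < n ∧ c.st i ≠ 0 ∧ (∀ j < n, c'.st j = nextSt c i j) ∧ (∀ j < n, c'.pos j = nextPos c i j)

/-- The turning rule is applicable to monomer `i` in configuration `c`. -/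
def Applicable {n : ℕ} (c : Config n) (i : ℕ) : Prop := ∃ c', StepAt c i c'

/-- Monomer `i` is blocked in `c`: nonzero state, but no applicable rule. -/
def Blocked {n : ℕ} (c : Config n) (i : ℕ) : Prop :=
  i < n ∧ c.st i ≠ 0 ∧ ¬ Applicable c i

/-- One asynchronous step of the machine. -/
def Step {n : ℕ} (c c' : Config n) : Prop := ∃ i, StepAt c i c'

/-- `c` is reachable from `c₀` by a finite sequence of rule applications. -/
def Reachable {n : ℕ} (c₀ c : Config n) : Prop := Relation.ReflTransGen Step c₀ c

/-- No rule is applicable in `c`. -/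
def Terminal {n : ℕ} (c : Config n) : Prop := ∀ i, ¬ Applicable c i

/-- `c` is permanently blocked: some state is nonzero but no monomer admits an applicable rule. -/
def PermBlocked {n : ℕ} (c : Config n) : Prop :=
  (∃ i < n, c.st i ≠ 0) ∧ Terminal c

/-- The Turning Machine with initial configuration `c₀` computes the target configuration `ct`:
every maximal sequence of rule applications from `c₀` is finite and ends in `ct`
(configurations are compared on the meaningful indices `< n`). -/
def Computes {n : ℕ} (c₀ ct : Config n) : Prop :=
  (¬ ∃ f : ℕ → Config n, f 0 = c₀ ∧ ∀ k, Step (f k) (f (k + 1))) ∧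
  ∀ c, Reachable c₀ c → Terminal c → ∀ i < n, c.st i = ct.st i ∧ c.pos i = ct.pos i

/-- The initial configuration with monomers on the x-axis, `pos m_i = (i,0)`, and
initial states `s₀`. -/
def mkInit (n : ℕ) (s₀ : ℕ → ℤ) : Config n where
  st := s₀
  pos := fun i => ((i : ℤ), 0)
  pos_zero := by simp
  step_unit := by
    intro i _
    have h : (((i + 1 : ℕ) : ℤ), (0 : ℤ)) - (((i : ℕ) : ℤ), (0 : ℤ)) = ((1 : ℤ), (0 : ℤ)) := by
      simp only [Prod.mk_sub_mk, Prod.mk.injEq]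
      constructor <;> push_cast <;> ring
    rw [h]
    simp [unitVecs]
  pos_inj := by
    intro i _ j _ h
    have h1 : ((i : ℕ) : ℤ) = ((j : ℕ) : ℤ) := congrArg Prod.fst h
    exact_mod_cast h1

/-- The initial configuration of the line-rotating Turning Machine `L^σ_n`:
`pos m_i = (i,0)`, states `σ` except the last monomer which has state `0`. -/
def lineInit (n : ℕ) (σ : ℤ) : Config n :=
  mkInit n (fun i => if i + 1 = n then 0 else σ)

/-- `Δs`: the number of rule applications made to monomer `i` on the way from `c₀` to `c`
(each application changes the state by one, towards `0`). -/
def dS {n : ℕ} (c₀ c : Config n) (i : ℕ) : ℤ := |c₀.st i - c.st i|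

/-- The set of positions occupied by a configuration. -/
def posSet {n : ℕ} (c : Config n) : Set Pt := {q | ∃ i < n, c.pos i = q}


/-- Adjacency on the triangular grid. -/
def Adj (p q : Pt) : Prop := q - p ∈ unitVecs

/-- The graph induced by the edge relation `E` on the set `S` is connected. -/
def ConnectedIn (E : Pt → Pt → Prop) (S : Set Pt) : Prop :=
  ∀ p ∈ S, ∀ q ∈ S, Relation.ReflTransGen (fun a b => a ∈ S ∧ b ∈ S ∧ E a b) p q

/-- A shape: a finite subset of the grid whose induced graph is connected. -/
def IsShape (S : Set Pt) : Prop := S.Finite ∧ ConnectedIn Adj S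

/-- `y`-monotone shape: the points of each row form a set of consecutive integers. -/
def YMonotone (S : Set Pt) : Prop :=
  ∀ j x₁ x₂ x₃ : ℤ, x₁ ≤ x₂ → x₂ ≤ x₃ → (x₁, j) ∈ S → (x₃, j) ∈ S → (x₂, j) ∈ S

/-- Adjacency along the `x` and `y` axes only. -/
def AdjXY (p q : Pt) : Prop :=
  q - p ∈ ({((1 : ℤ), (0 : ℤ)), (-1, 0), (0, 1), (0, -1)} : Set Pt)

/-- `xy`-connected: connected using only `±x` and `±y` edges. -/
def XYConnected (S : Set Pt) : Prop := ConnectedIn AdjXY S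

/-- The perimeter of a shape: its points having a neighbour outside the shape. -/
def perimeter (S : Set Pt) : Set Pt := {p ∈ S | ∃ v ∈ unitVecs, p + v ∉ S}

/-- Translation of a set of points. -/
def translate (t : Pt) (S : Set Pt) : Set Pt := (fun p => p + t) '' S

/-- The cardinality of the symmetric difference of two sets of points. -/
noncomputable def symmDiffCard (A B : Set Pt) : ℕ := ((A \ B) ∪ (B \ A)).ncard

/-- Error of a configuration w.r.t. a shape: the least cardinality, over all translations `t`,
of the symmetric difference of `S + t` and the set of monomer positions. -/
noncomputable def foldError {n : ℕ} (S : Set Pt) (c : Config n) : ℕ :=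
  sInf {m | ∃ t : Pt, symmDiffCard (translate t S) (posSet c) = m}

/-- The allowed steps of a `yw`-chain. -/
def ywSteps : Set Pt := {((0 : ℤ), (1 : ℤ)), (-1, 1)}

/-- `c 0, …, c (k-1)` is a `yw`-separator of the `y`-monotone shape `S`: a `yw`-chain inside `S`
from the bottommost row of `S` to the topmost row of `S`. -/
def IsYWSep (S : Set Pt) (k : ℕ) (c : ℕ → Pt) : Prop :=
  0 < k ∧ (∀ ℓ, ℓ + 1 < k → c (ℓ + 1) - c ℓ ∈ ywSteps) ∧ (∀ ℓ < k, c ℓ ∈ S) ∧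
    (∀ p ∈ S, (c 0).2 ≤ p.2) ∧ (∀ p ∈ S, p.2 ≤ (c (k - 1)).2)

/-- The shape `S` scaled by a factor `2`. -/
def scale2 (S : Set Pt) : Set Pt :=
  {q | ∃ p ∈ S, ∃ a b : ℤ, (a = 0 ∨ a = 1) ∧ (b = 0 ∨ b = 1) ∧ q = (2 * p.1 + a, 2 * p.2 + b)}

/-- The right boundary of a shape: the rightmost point of each nonempty row. -/
def rightBdry (S : Set Pt) : Set Pt := {p ∈ S | ∀ q ∈ S, q.2 = p.2 → q.1 ≤ p.1}

/-- The left boundary of a shape: the leftmost point of each nonempty row. -/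
def leftBdry (S : Set Pt) : Set Pt := {p ∈ S | ∀ q ∈ S, q.2 = p.2 → p.1 ≤ q.1}

/-- The "almost rectangle" `R_{k'}` from the definition of the `1`-gap spiral. -/
def spiralRing (k : ℤ) : Set Pt :=
  (({p : Pt | (p.2 = 2 * k ∨ p.2 = -(2 * k)) ∧ -(2 * k) ≤ p.1 ∧ p.1 ≤ 2 * k - 1} ∪
      {p : Pt | (p.1 = -(2 * k) ∨ p.1 = 2 * k - 1) ∧ -(2 * k) ≤ p.2 ∧ p.2 ≤ 2 * k}) ∪
      {(2 * k - 2, -(2 * k) + 2), (2 * k, -(2 * k)), (2 * k + 1, -(2 * k))}) \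
    {(2 * k - 1, -(2 * k) + 1)}

/-- The `k`-turn `1`-gap spiral `S_k`. -/
def spiral (k : ℕ) : Set Pt := ⋃ j ∈ Finset.Icc 1 k, spiralRing (j : ℤ)

/-- The base turning numbers `t_i` of the inside-to-outside sequence. -/
def tIn (t0 : ℤ) : ℕ → ℤ
  | 0 => t0
  | i + 1 => tIn t0 i + (if (i + 1) % 2 = 0 then 2 else 1)

/-- The inside-to-outside turning number sequence
`T_in(t₀) = [t₀]¹,[t₁]²,…,[t_{4k}]^{4k+1}, t_{4k}`. -/
def TInList (k : ℕ) (t0 : ℤ) : List ℤ :=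
  ((List.range (4 * k + 1)).flatMap fun i => List.replicate (i + 1) (tIn t0 i)) ++ [tIn t0 (4 * k)]

/-- The base turning numbers `t_i` of the outside-to-inside sequence. -/
def tOut (t0 : ℤ) : ℕ → ℤ
  | 0 => t0
  | i + 1 => tOut t0 i - (if (i + 1) % 2 = 0 then 1 else 2)

/-- The outside-to-inside turning number sequence
`T_out(t₀) = t₀,[t₀]^{4k+1},[t₁]^{4k},…,[t_{4k}]¹`. -/
def TOutList (k : ℕ) (t0 : ℤ) : List ℤ :=
  t0 :: ((List.range (4 * k + 1)).flatMap fun i => List.replicate (4 * k + 1 - i) (tOut t0 i))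

/-- The cross shape with arm length `a`. -/
def cross (a : ℤ) : Set Pt :=
  {p : Pt | p.2 = 0 ∧ -a ≤ p.1 ∧ p.1 ≤ a} ∪ {p : Pt | p.1 = 0 ∧ -a ≤ p.2 ∧ p.2 ≤ a}

/-- A positive zig-zag path: pairwise distinct points with steps in `{x, -x, y, w}`. -/
def PosZigZag (n : ℕ) (p : ℕ → Pt) : Prop :=
  (∀ i < n, ∀ j < n, p i = p j → i = j) ∧
    ∀ i, i + 1 < n → p (i + 1) - p i ∈ ({((1 : ℤ), (0 : ℤ)), (-1, 0), (0, 1), (-1, 1)} : Set Pt)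

/-- A negative zig-zag path: pairwise distinct points with steps in `{x, -x, -y, -w}`. -/
def NegZigZag (n : ℕ) (p : ℕ → Pt) : Prop :=
  (∀ i < n, ∀ j < n, p i = p j → i = j) ∧
    ∀ i, i + 1 < n → p (i + 1) - p i ∈ ({((1 : ℤ), (0 : ℤ)), (-1, 0), (0, -1), (1, -1)} : Set Pt)


def e (s : ℕ) : Pt := rot^[s] (1, 0)

lemma e_succ (s : ℕ) : e (s + 1) = rot (e s) := Function.iterate_succ_apply' rot s (1,0)

lemma e0 : e 0 = (1, 0) := rfl
lemma e1 : e 1 = (0, 1) := rfl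
lemma e2 : e 2 = (-1, 1) := rfl
lemma e3 : e 3 = (-1, 0) := rfl
lemma e4 : e 4 = (0, -1) := rfl
lemma e5 : e 5 = (1, -1) := rfl
lemma e6 : e 6 = (1, 0) := rfl
lemma e7 : e 7 = (0, 1) := rfl

lemma rot_mem_unitVecs {p : Pt} (h : p ∈ unitVecs) : rot p ∈ unitVecs := by
  simp only [unitVecs, Set.mem_insert_iff, Set.mem_singleton_iff] at h ⊢
  rcases h with h|h|h|h|h|h <;> subst h <;> simp [rot]

lemma e_mem (s : ℕ) : e s ∈ unitVecs := by
  induction s with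
  | zero => simp [e, unitVecs]
  | succ s ih => rw [e_succ]; exact rot_mem_unitVecs ih

lemma rot_rot (p : Pt) : rot (rot p) = rot p - p := by
  cases p with
  | mk a b => simp only [rot, Prod.mk_sub_mk, Prod.mk.injEq]; omega

lemma e_add_two (s : ℕ) : e (s + 2) = rot (rot (e s)) := by
  show e (s + 1 + 1) = _
  rw [e_succ, e_succ]

def P (t : ℕ → ℕ) (i : ℕ) : Pt := ∑ l ∈ Finset.range i, e (t l)

lemma P_zero (t : ℕ → ℕ) : P t 0 = (0, 0) := by simp [P]; rfl

lemma P_succ (t : ℕ → ℕ) (i : ℕ) : P t (i + 1) = P t i + e (t i) :=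
  Finset.sum_range_succ _ i

lemma P_congr {t t' : ℕ → ℕ} (i : ℕ) (h : ∀ l < i, t l = t' l) : P t i = P t' i :=
  Finset.sum_congr rfl (fun l hl => by rw [h l (Finset.mem_range.mp hl)])


lemma fP_mono (n : ℕ) (t : ℕ → ℕ) (a b c : ℤ) (lo : ℕ)
    (h : ∀ l, lo ≤ l → l + 1 < n → c ≤ a * (e (t l)).1 + b * (e (t l)).2) :
    ∀ i i', lo ≤ i → i ≤ i' → i' < n →
      a * (P t i).1 + b * (P t i).2 + c * ((i' : ℤ) - i) ≤ a * (P t i').1 + b * (P t i').2 := by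
  intro i i' hlo hle hn
  induction i' with
  | zero =>
    have : i = 0 := Nat.le_zero.mp hle
    subst this; simp
  | succ m ih =>
    rcases Nat.lt_or_ge i (m + 1) with hlt | hge
    · have hm : i ≤ m := Nat.lt_succ_iff.mp hlt
      have := ih hm (by omega)
      have hstep := h m (le_trans hlo hm) hn
      rw [P_succ]
      push_cast
      simp only [Prod.fst_add, Prod.snd_add]
      nlinarith [this, hstep]
    · have : i = m + 1 := le_antisymm hle hge
      subst this; simp

lemma inj_of (n A : ℕ) (t : ℕ → ℕ) (a b : ℤ)
    (hstrict : ∀ l, A ≤ l → l + 1 < n → 1 ≤ a * (e (t l)).1 + b * (e (t l)).2)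
    (hhead : ∀ i ≤ A, ∀ i' ≤ A, P t i = P t i' → i = i')
    (hsep : ∀ i < A, ∀ i', A < i' → i' < n → P t i ≠ P t i') :
    ∀ i < n, ∀ i' < n, P t i = P t i' → i = i' := by
  have key : ∀ i i', i < i' → i' < n → P t i = P t i' → False := by
    intro i i' hlt hn heq
    rcases Nat.lt_or_ge i' (A+1) with hA' | hA'
    · exact absurd (hhead i (by omega) i' (by omega) heq) (by omega)
    · rcases Nat.lt_or_ge i A with hiA | hiA
      · exact hsep i hiA i' (by omega) hn heq
      · have h1 := fP_mono n t a b 1 A hstrict i i' hiA (le_of_lt hlt) hn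
        rw [heq] at h1
        have h2 : (i' : ℤ) - i ≥ 1 := by exact_mod_cast by omega
        omega
  intro i hi i' hi' heq
  rcases Nat.lt_trichotomy i i' with h | h | h
  · exact absurd heq (fun heq => key i i' h hi' heq)
  · exact h
  · exact absurd heq.symm (fun heq => key i' i h hi heq)

def tau (i : ℕ) : ℕ := if i = 0 then 0 else min (i + 1) 6

def tc (n k j i : ℕ) : ℕ := if i + 1 < n then min (tau i) (if j ≤ i then k else k - 1) else 0

lemma valid6 (n j : ℕ) (hn : 7 ≤ n) (hj : 5 ≤ j) :
    ∀ i < n, ∀ i' < n, P (tc n 6 j) i = P (tc n 6 j) i' → i = i' := by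
  have ht0 : tc n 6 j 0 = 0 := by
    simp only [tc, tau]; split_ifs <;> try simp_all
  have ht1 : tc n 6 j 1 = 2 := by
    simp only [tc, tau]; split_ifs <;> first | omega | simp_all
  have ht2 : tc n 6 j 2 = 3 := by
    simp only [tc, tau]; split_ifs <;> first | omega | simp_all
  have ht3 : tc n 6 j 3 = 4 := by
    simp only [tc, tau]; split_ifs <;> first | omega | simp_all
  have ht4 : tc n 6 j 4 = 5 := by
    simp only [tc, tau]; split_ifs <;> first | omega | simp_all
  have htail : ∀ l, 5 ≤ l → l + 1 < n → tc n 6 j l = 5 ∨ tc n 6 j l = 6 := by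
    intro l hl hln
    simp only [tc, tau]; split_ifs <;> first | omega | simp_all
  have p1 : P (tc n 6 j) 1 = (1, 0) := by rw [P_succ _ 0, P_zero, ht0, e0]; rfl
  have p2 : P (tc n 6 j) 2 = (0, 1) := by rw [P_succ _ 1, p1, ht1, e2]; rfl
  have p3 : P (tc n 6 j) 3 = (-1, 1) := by rw [P_succ _ 2, p2, ht2, e3]; rfl
  have p4 : P (tc n 6 j) 4 = (-1, 0) := by rw [P_succ _ 3, p3, ht3, e4]; rfl
  have p5 : P (tc n 6 j) 5 = (0, -1) := by rw [P_succ _ 4, p4, ht4, e5]; rfl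
  apply inj_of n 5 _ 1 0
  · intro l hl hln
    rcases htail l hl hln with h | h <;> rw [h] <;> simp [e5, e6]
  · intro i hi i' hi' heq
    interval_cases i <;> interval_cases i' <;> simp_all [P_zero, Prod.ext_iff] <;> omega
  · intro i hi i' hi' hn' heq
    have hy : (P (tc n 6 j) i').2 ≤ -1 := by
      have hm := fP_mono n (tc n 6 j) 0 (-1) 0 5
        (fun l hl hln => by rcases htail l hl hln with h | h <;> rw [h] <;> simp [e5, e6])
        5 i' le_rfl (by omega) hn'
      rw [p5] at hm; simp at hm; omega
    have hyi : (P (tc n 6 j) i).2 >= 0 := by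
      interval_cases i <;> simp [P_zero, p1, p2, p3, p4]
    rw [heq] at hyi; omega

lemma valid1 (n j : ℕ) :
    ∀ i < n, ∀ i' < n, P (tc n 1 j) i = P (tc n 1 j) i' → i = i' := by
  apply inj_of n 0 _ 1 2
  · intro l _ hln
    have h : tc n 1 j l = 0 ∨ tc n 1 j l = 1 := by
      simp only [tc, tau]; split_ifs <;> first | omega | simp_all
    rcases h with h | h <;> rw [h] <;> simp [e0, e1]
  · intro i hi i' hi' _; omega
  · intro i hi; omega

lemma valid2 (n j : ℕ) :
    ∀ i < n, ∀ i' < n, P (tc n 2 j) i = P (tc n 2 j) i' → i = i' := by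
  apply inj_of n 0 _ 1 2
  · intro l _ hln
    have h : tc n 2 j l = 0 ∨ tc n 2 j l = 1 ∨ tc n 2 j l = 2 := by
      simp only [tc, tau]; split_ifs <;> first | omega | simp_all
    rcases h with h | h | h <;> rw [h] <;> simp [e0, e1, e2]
  · intro i hi i' hi' _; omega
  · intro i hi; omega

lemma valid3 (n j : ℕ) (hn : 7 ≤ n) :
    ∀ i < n, ∀ i' < n, P (tc n 3 j) i = P (tc n 3 j) i' → i = i' := by
  have ht0 : tc n 3 j 0 = 0 := by
    simp only [tc, tau]; split_ifs <;> first | omega | simp_all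
  have ht1 : tc n 3 j 1 = 2 := by
    simp only [tc, tau]; split_ifs <;> first | omega | simp_all
  have htail : ∀ l, 2 ≤ l → l + 1 < n → tc n 3 j l = 2 ∨ tc n 3 j l = 3 := by
    intro l hl hln
    simp only [tc, tau]; split_ifs <;> first | omega | simp_all
  have p1 : P (tc n 3 j) 1 = (1, 0) := by rw [P_succ _ 0, P_zero, ht0, e0]; rfl
  have p2 : P (tc n 3 j) 2 = (0, 1) := by rw [P_succ _ 1, p1, ht1, e2]; rfl
  apply inj_of n 2 _ (-1) 0
  · intro l hl hln
    rcases htail l hl hln with h | h <;> rw [h] <;> simp [e2, e3]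
  · intro i hi i' hi' heq
    interval_cases i <;> interval_cases i' <;> simp_all [P_zero, Prod.ext_iff] <;> omega
  · intro i hi i' hi' hn' heq
    have hy : 1 ≤ (P (tc n 3 j) i').2 := by
      have hm := fP_mono n (tc n 3 j) 0 1 0 2
        (fun l hl hln => by rcases htail l hl hln with h | h <;> rw [h] <;> simp [e2, e3])
        2 i' le_rfl (by omega) hn'
      rw [p2] at hm; simp at hm; omega
    have hyi : (P (tc n 3 j) i).2 = 0 := by
      interval_cases i <;> simp [P_zero, p1]
    rw [heq] at hyi; omega

lemma valid4 (n j : ℕ) (hn : 7 ≤ n) :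
    ∀ i < n, ∀ i' < n, P (tc n 4 j) i = P (tc n 4 j) i' → i = i' := by
  have ht0 : tc n 4 j 0 = 0 := by
    simp only [tc, tau]; split_ifs <;> first | omega | simp_all
  have ht1 : tc n 4 j 1 = 2 := by
    simp only [tc, tau]; split_ifs <;> first | omega | simp_all
  have ht2 : tc n 4 j 2 = 3 := by
    simp only [tc, tau]; split_ifs <;> first | omega | simp_all
  have htail : ∀ l, 3 ≤ l → l + 1 < n → tc n 4 j l = 3 ∨ tc n 4 j l = 4 := by
    intro l hl hln
    simp only [tc, tau]; split_ifs <;> first | omega | simp_all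
  have p1 : P (tc n 4 j) 1 = (1, 0) := by rw [P_succ _ 0, P_zero, ht0, e0]; rfl
  have p2 : P (tc n 4 j) 2 = (0, 1) := by rw [P_succ _ 1, p1, ht1, e2]; rfl
  have p3 : P (tc n 4 j) 3 = (-1, 1) := by rw [P_succ _ 2, p2, ht2, e3]; rfl
  have hstrict : ∀ l, 3 ≤ l → l + 1 < n →
      1 ≤ (-1) * (e (tc n 4 j l)).1 + (-1) * (e (tc n 4 j l)).2 := by
    intro l hl hln
    rcases htail l hl hln with h | h <;> rw [h] <;> simp [e3, e4]
  apply inj_of n 3 _ (-1) (-1)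
  · exact hstrict
  · intro i hi i' hi' heq
    interval_cases i <;> interval_cases i' <;> simp_all [P_zero, Prod.ext_iff] <;> omega
  · intro i hi i' hi' hn' heq
    have hm := fP_mono n (tc n 4 j) (-1) (-1) 1 3 hstrict 3 i' le_rfl (by omega) hn'
    rw [p3] at hm
    have hc : (4 : ℤ) ≤ (i' : ℤ) := by exact_mod_cast hi'
    rw [← heq] at hm
    interval_cases i <;> simp [P_zero, p1, p2] at hm <;> omega

lemma valid5 (n j : ℕ) (hn : 7 ≤ n) :
    ∀ i < n, ∀ i' < n, P (tc n 5 j) i = P (tc n 5 j) i' → i = i' := by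
  have ht0 : tc n 5 j 0 = 0 := by
    simp only [tc, tau]; split_ifs <;> first | omega | simp_all
  have ht1 : tc n 5 j 1 = 2 := by
    simp only [tc, tau]; split_ifs <;> first | omega | simp_all
  have ht2 : tc n 5 j 2 = 3 := by
    simp only [tc, tau]; split_ifs <;> first | omega | simp_all
  have ht3 : tc n 5 j 3 = 4 := by
    simp only [tc, tau]; split_ifs <;> first | omega | simp_all
  have htail : ∀ l, 4 ≤ l → l + 1 < n → tc n 5 j l = 4 ∨ tc n 5 j l = 5 := by
    intro l hl hln
    simp only [tc, tau]; split_ifs <;> first | omega | simp_all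
  have p1 : P (tc n 5 j) 1 = (1, 0) := by rw [P_succ _ 0, P_zero, ht0, e0]; rfl
  have p2 : P (tc n 5 j) 2 = (0, 1) := by rw [P_succ _ 1, p1, ht1, e2]; rfl
  have p3 : P (tc n 5 j) 3 = (-1, 1) := by rw [P_succ _ 2, p2, ht2, e3]; rfl
  have p4 : P (tc n 5 j) 4 = (-1, 0) := by rw [P_succ _ 3, p3, ht3, e4]; rfl
  have hstrict : ∀ l, 4 ≤ l → l + 1 < n →
      1 ≤ (0 : ℤ) * (e (tc n 5 j l)).1 + (-1) * (e (tc n 5 j l)).2 := by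
    intro l hl hln
    rcases htail l hl hln with h | h <;> rw [h] <;> simp [e4, e5]
  apply inj_of n 4 _ 0 (-1)
  · exact hstrict
  · intro i hi i' hi' heq
    interval_cases i <;> interval_cases i' <;> simp_all [P_zero, Prod.ext_iff] <;> omega
  · intro i hi i' hi' hn' heq
    have hm := fP_mono n (tc n 5 j) 0 (-1) 1 4 hstrict 4 i' le_rfl (by omega) hn'
    rw [p4] at hm
    have hc : (5 : ℤ) ≤ (i' : ℤ) := by exact_mod_cast hi'
    rw [← heq] at hm
    interval_cases i <;> simp [P_zero, p1, p2, p3] at hm <;> omega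


lemma Config.ext' {n : ℕ} {c c' : Config n} (h1 : c.st = c'.st) (h2 : c.pos = c'.pos) :
    c = c' := by
  cases c; cases c'; cases h1; cases h2; rfl

def confSt (n : ℕ) (t : ℕ → ℕ) : ℕ → ℤ := fun i => if i + 1 = n then 0 else 6 - (t i : ℤ)

def conf (n : ℕ) (t : ℕ → ℕ) (h : ∀ i < n, ∀ j < n, P t i = P t j → i = j) : Config n where
  st := confSt n t
  pos := P t
  pos_zero := P_zero t
  step_unit := by
    intro i _
    rw [P_succ, add_sub_cancel_left]
    exact e_mem _
  pos_inj := h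

lemma P_shift {t t' : ℕ → ℕ} {i₀ : ℕ} (ht : ∀ l, t' l = if l = i₀ then t l + 1 else t l)
    {j : ℕ} (hj : i₀ < j) :
    P t' j = P t j + (e (t i₀ + 1) - e (t i₀)) := by
  classical
  have hmem : i₀ ∈ Finset.range j := Finset.mem_range.mpr hj
  rw [P, P, ← Finset.sum_erase_add _ _ hmem, ← Finset.sum_erase_add _ _ hmem]
  have hs : ∑ l ∈ (Finset.range j).erase i₀, e (t' l)
      = ∑ l ∈ (Finset.range j).erase i₀, e (t l) := by
    apply Finset.sum_congr rfl
    intro l hl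
    rw [ht l, if_neg (Finset.ne_of_mem_erase hl)]
  rw [hs, ht i₀, if_pos rfl]
  abel

lemma stepAt_conf (n : ℕ) (t t' : ℕ → ℕ) (i₀ : ℕ) (hi : i₀ + 1 < n)
    (ht : ∀ l, t' l = if l = i₀ then t l + 1 else t l) (h6 : t i₀ < 6)
    (h : ∀ i < n, ∀ j < n, P t i = P t j → i = j)
    (h' : ∀ i < n, ∀ j < n, P t' i = P t' j → i = j) :
    StepAt (conf n t h) i₀ (conf n t' h') := by
  have hstpos : (0 : ℤ) < (conf n t h).st i₀ := by
    show (0:ℤ) < confSt n t i₀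
    rw [confSt, if_neg (by omega : ¬ i₀ + 1 = n)]
    have : (t i₀ : ℤ) < 6 := by exact_mod_cast h6
    omega
  refine ⟨by omega, ne_of_gt hstpos, ?_, ?_⟩
  · intro j hj
    show confSt n t' j = nextSt (conf n t h) i₀ j
    rw [nextSt]
    by_cases hji : j = i₀
    · subst hji
      rw [if_pos rfl, if_pos hstpos]
      show confSt n t' j = confSt n t j - 1
      rw [confSt, confSt, if_neg (by omega : ¬ j + 1 = n), if_neg (by omega : ¬ j + 1 = n),
        ht j, if_pos rfl]
      push_cast
      ring
    · rw [if_neg hji]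
      show confSt n t' j = confSt n t j
      rw [confSt, confSt, ht j, if_neg hji]
  · intro j hj
    show P t' j = nextPos (conf n t h) i₀ j
    rw [nextPos]
    by_cases hji : i₀ < j
    · rw [if_pos hji]
      have hdelta : delta (conf n t h) i₀ = e (t i₀ + 1) - e (t i₀) := by
        rw [delta, if_pos hstpos]
        have hdir : dir (conf n t h) i₀ = e (t i₀) := by
          show P t (i₀ + 1) - P t i₀ = e (t i₀)
          rw [P_succ, add_sub_cancel_left]
        rw [hdir, rot_rot, e_succ]
      rw [hdelta]
      exact P_shift ht hji
    · rw [if_neg hji]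
      show P t' j = P t j
      exact P_congr j (fun l hl => by rw [ht l, if_neg (by omega)])

lemma conf_eq {n : ℕ} {t t' : ℕ → ℕ} (h : t = t') {ht ht'} :
    conf n t ht = conf n t' ht' := by subst h; rfl

/-- One sweep: front moves from `n-1` down to `A`. -/
lemma sweep_reach (n k A : ℕ) (hk1 : 1 ≤ k) (hk6 : k ≤ 6) (hA1 : 1 ≤ A) (hAn : A ≤ n - 1)
    (hn : 7 ≤ n)
    (hTau : ∀ l, A ≤ l → k ≤ tau l)
    (hvalid : ∀ j, A ≤ j → ∀ i < n, ∀ i' < n, P (tc n k j) i = P (tc n k j) i' → i = i') :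
    Reachable (conf n (tc n k (n-1)) (hvalid _ (by omega))) (conf n (tc n k A) (hvalid _ le_rfl)) := by
  have key : ∀ d j, j = n - 1 - d → ∀ hAj : A ≤ j,
      Reachable (conf n (tc n k (n-1)) (hvalid _ (by omega))) (conf n (tc n k j) (hvalid _ hAj)) := by
    intro d
    induction d with
    | zero =>
      intro j hjd hAj
      have hj : j = n - 1 := by omega
      subst hj
      exact Relation.ReflTransGen.refl
    | succ m ih =>
      intro j hjd hAj
      rcases Nat.lt_or_ge j (n - 1 - m) with hlt | hge
      · have hj1 : j + 1 = n - 1 - m := by omega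
        have hstep : StepAt (conf n (tc n k (j+1)) (hvalid _ (by omega))) j
            (conf n (tc n k j) (hvalid _ hAj)) := by
          apply stepAt_conf
          · omega
          · intro l
            by_cases hlj : l = j
            · subst hlj
              have h1 : k ≤ tau l := hTau l hAj
              simp only [tc, tau] at h1 ⊢
              split_ifs at h1 ⊢ <;> omega
            · rw [if_neg hlj]
              simp only [tc]
              split_ifs <;> first | rfl | omega
          · have : tc n k (j+1) j = min (tau j) (k - 1) := by
              rw [tc, if_pos (by omega), if_neg (by omega)]
            omega
        have hreach := ih (j+1) (by omega) (by omega)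
        exact Relation.ReflTransGen.tail hreach ⟨j, hstep⟩
      · have : j = n - 1 - m := by omega
        subst this
        exact ih _ rfl hAj
  exact key (n - 1 - A) A (by omega) le_rfl

lemma P_line (t : ℕ → ℕ) : ∀ i, (∀ l < i, t l = 0) → P t i = ((i : ℤ), 0) := by
  intro i
  induction i with
  | zero => intro _; exact P_zero t
  | succ m ih =>
    intro h
    rw [P_succ, ih (fun l hl => h l (by omega)), h m (by omega), e0]
    simp only [Prod.mk_add_mk, Prod.mk.injEq]
    push_cast
    exact ⟨rfl, trivial⟩

lemma lineInit_eq_conf (n : ℕ) (hn : 7 ≤ n) :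
    lineInit n 6 = conf n (tc n 1 (n-1)) (fun i hi i' hi' => valid1 n (n-1) i hi i' hi') := by
  have hz : ∀ l, tc n 1 (n-1) l = 0 := by
    intro l
    simp only [tc, tau]; split_ifs <;> omega
  apply Config.ext'
  · funext i
    show (if i + 1 = n then 0 else (6:ℤ)) = confSt n (tc n 1 (n-1)) i
    rw [confSt]
    by_cases hi : i + 1 = n
    · rw [if_pos hi, if_pos hi]
    · rw [if_neg hi, if_neg hi]
      have : tc n 1 (n-1) i = 0 := by
        simp only [tc, tau]; split_ifs <;> omega
      rw [this]
      norm_num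
  · funext i
    show ((i : ℤ), (0:ℤ)) = P (tc n 1 (n-1)) i
    exact (P_line _ i (fun l _ => hz l)).symm

lemma tau_ge (k A : ℕ) (h : ∀ l, A ≤ l → k ≤ min (l+1) 6) :
    ∀ l, A ≤ l → 1 ≤ A → k ≤ tau l := by
  intro l hl hA
  have : l ≠ 0 := by omega
  rw [tau, if_neg this]
  exact h l hl

lemma reach_final (n : ℕ) (hn : 7 ≤ n) :
    Reachable (lineInit n 6) (conf n (tc n 6 5) (valid6 n 5 hn le_rfl)) := by
  have V1 : ∀ j, 1 ≤ j → ∀ i < n, ∀ i' < n, P (tc n 1 j) i = P (tc n 1 j) i' → i = i' :=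
    fun j _ => valid1 n j
  have V2 : ∀ j, 1 ≤ j → ∀ i < n, ∀ i' < n, P (tc n 2 j) i = P (tc n 2 j) i' → i = i' :=
    fun j _ => valid2 n j
  have V3 : ∀ j, 2 ≤ j → ∀ i < n, ∀ i' < n, P (tc n 3 j) i = P (tc n 3 j) i' → i = i' :=
    fun j _ => valid3 n j hn
  have V4 : ∀ j, 3 ≤ j → ∀ i < n, ∀ i' < n, P (tc n 4 j) i = P (tc n 4 j) i' → i = i' :=
    fun j _ => valid4 n j hn
  have V5 : ∀ j, 4 ≤ j → ∀ i < n, ∀ i' < n, P (tc n 5 j) i = P (tc n 5 j) i' → i = i' :=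
    fun j _ => valid5 n j hn
  have V6 : ∀ j, 5 ≤ j → ∀ i < n, ∀ i' < n, P (tc n 6 j) i = P (tc n 6 j) i' → i = i' :=
    fun j hj => valid6 n j hn hj
  have tauK : ∀ (k A : ℕ), 1 ≤ A → (∀ l, A ≤ l → k ≤ min (l+1) 6) → ∀ l, A ≤ l → k ≤ tau l :=
    fun k A hA h l hl => tau_ge k A h l hl hA
  have R1 := sweep_reach n 1 1 (by omega) (by omega) le_rfl (by omega) hn
    (tauK 1 1 le_rfl (fun l hl => by omega)) V1
  have R2 := sweep_reach n 2 1 (by omega) (by omega) le_rfl (by omega) hn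
    (tauK 2 1 le_rfl (fun l hl => by omega)) V2
  have R3 := sweep_reach n 3 2 (by omega) (by omega) (by omega) (by omega) hn
    (tauK 3 2 (by omega) (fun l hl => by omega)) V3
  have R4 := sweep_reach n 4 3 (by omega) (by omega) (by omega) (by omega) hn
    (tauK 4 3 (by omega) (fun l hl => by omega)) V4
  have R5 := sweep_reach n 5 4 (by omega) (by omega) (by omega) (by omega) hn
    (tauK 5 4 (by omega) (fun l hl => by omega)) V5
  have R6 := sweep_reach n 6 5 (by omega) (by omega) (by omega) (by omega) hn
    (tauK 6 5 (by omega) (fun l hl => by omega)) V6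
  have E1 : tc n 1 1 = tc n 2 (n-1) := by
    funext l; simp only [tc, tau]; split_ifs <;> omega
  have E2 : tc n 2 1 = tc n 3 (n-1) := by
    funext l; simp only [tc, tau]; split_ifs <;> omega
  have E3 : tc n 3 2 = tc n 4 (n-1) := by
    funext l; simp only [tc, tau]; split_ifs <;> omega
  have E4 : tc n 4 3 = tc n 5 (n-1) := by
    funext l; simp only [tc, tau]; split_ifs <;> omega
  have E5 : tc n 5 4 = tc n 6 (n-1) := by
    funext l; simp only [tc, tau]; split_ifs <;> omega
  have L1 : Reachable (lineInit n 6) (conf n (tc n 1 1) (V1 _ le_rfl)) := by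
    rw [lineInit_eq_conf n hn]
    exact R1
  have L2 : Reachable (lineInit n 6) (conf n (tc n 2 1) (V2 _ le_rfl)) := by
    refine L1.trans ?_
    rw [conf_eq E1]
    exact R2
  have L3 : Reachable (lineInit n 6) (conf n (tc n 3 2) (V3 _ le_rfl)) := by
    refine L2.trans ?_
    rw [conf_eq E2]
    exact R3
  have L4 : Reachable (lineInit n 6) (conf n (tc n 4 3) (V4 _ le_rfl)) := by
    refine L3.trans ?_
    rw [conf_eq E3]
    exact R4
  have L5 : Reachable (lineInit n 6) (conf n (tc n 5 4) (V5 _ le_rfl)) := by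
    refine L4.trans ?_
    rw [conf_eq E4]
    exact R5
  have L6 : Reachable (lineInit n 6) (conf n (tc n 6 5) (V6 _ le_rfl)) := by
    refine L5.trans ?_
    rw [conf_eq E5]
    exact R6
  exact L6

lemma blocked_at (n : ℕ) (hn : 7 ≤ n)
    (V : ∀ i < n, ∀ j < n, P (tc n 6 5) i = P (tc n 6 5) j → i = j) (i w : ℕ)
    (hiw : i < w) (hw : w < n)
    (hst : (0:ℤ) < (conf n (tc n 6 5) V).st i)
    (hcol : P (tc n 6 5) w + e (tc n 6 5 i + 2) = ((0:ℤ), (0:ℤ))) :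
    ¬ Applicable (conf n (tc n 6 5) V) i := by
  rintro ⟨c', _, _, _, hposs⟩
  have hdelta : delta (conf n (tc n 6 5) V) i = e (tc n 6 5 i + 2) := by
    rw [delta, if_pos hst, e_add_two]
    have hdir : dir (conf n (tc n 6 5) V) i = e (tc n 6 5 i) := by
      show P _ (i+1) - P _ i = e (tc n 6 5 i)
      rw [P_succ, add_sub_cancel_left]
    rw [hdir]
  have hw' : c'.pos w = ((0:ℤ), (0:ℤ)) := by
    rw [hposs w hw]
    show (if i < w then _ + _ else _) = _
    rw [if_pos hiw]
    show P (tc n 6 5) w + delta (conf n (tc n 6 5) V) i = _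
    rw [hdelta, hcol]
  have h0' : c'.pos 0 = ((0:ℤ), (0:ℤ)) := by
    rw [hposs 0 (by omega)]
    show (if i < 0 then _ else _) = _
    rw [if_neg (by omega)]
    exact P_zero (tc n 6 5)
  have := c'.pos_inj w hw 0 (by omega) (by rw [hw', h0'])
  omega

lemma blockedCfg_perm (n : ℕ) (hn : 7 ≤ n) :
    PermBlocked (conf n (tc n 6 5) (valid6 n 5 hn le_rfl)) := by
  set V := valid6 n 5 hn le_rfl with hV
  have ht0 : tc n 6 5 0 = 0 := by
    simp only [tc, tau]; split_ifs <;> first | omega | simp_all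
  have ht1 : tc n 6 5 1 = 2 := by
    simp only [tc, tau]; split_ifs <;> first | omega | simp_all
  have ht2 : tc n 6 5 2 = 3 := by
    simp only [tc, tau]; split_ifs <;> first | omega | simp_all
  have ht3 : tc n 6 5 3 = 4 := by
    simp only [tc, tau]; split_ifs <;> first | omega | simp_all
  have ht4 : tc n 6 5 4 = 5 := by
    simp only [tc, tau]; split_ifs <;> first | omega | simp_all
  have ht5 : tc n 6 5 5 = 6 := by
    simp only [tc, tau]; split_ifs <;> first | omega | simp_all
  have p1 : P (tc n 6 5) 1 = (1, 0) := by rw [P_succ _ 0, P_zero, ht0, e0]; rfl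
  have p2 : P (tc n 6 5) 2 = (0, 1) := by rw [P_succ _ 1, p1, ht1, e2]; rfl
  have p3 : P (tc n 6 5) 3 = (-1, 1) := by rw [P_succ _ 2, p2, ht2, e3]; rfl
  have p4 : P (tc n 6 5) 4 = (-1, 0) := by rw [P_succ _ 3, p3, ht3, e4]; rfl
  have p5 : P (tc n 6 5) 5 = (0, -1) := by rw [P_succ _ 4, p4, ht4, e5]; rfl
  have p6 : P (tc n 6 5) 6 = (1, -1) := by rw [P_succ _ 5, p5, ht5, e6]; rfl
  have hstval : ∀ i, i ≤ 4 → (conf n (tc n 6 5) V).st i = 6 - (tc n 6 5 i : ℤ) := by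
    intro i hi
    show confSt n (tc n 6 5) i = _
    rw [confSt, if_neg (by omega)]
  constructor
  · refine ⟨0, by omega, ?_⟩
    rw [hstval 0 (by omega), ht0]
    norm_num
  · intro i
    by_cases hi : i < n
    · by_cases hi4 : i ≤ 4
      · have hstpos : (0:ℤ) < (conf n (tc n 6 5) V).st i := by
          rw [hstval i hi4]
          interval_cases i <;> simp only [ht0, ht1, ht2, ht3, ht4] <;> norm_num
        interval_cases i
        · exact blocked_at n hn V 0 6 (by omega) (by omega) hstpos
            (by rw [p6, ht0, e2]; rfl)
        · exact blocked_at n hn V 1 2 (by omega) (by omega) hstpos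
            (by rw [p2, ht1, e4]; rfl)
        · exact blocked_at n hn V 2 3 (by omega) (by omega) hstpos
            (by rw [p3, ht2, e5]; rfl)
        · exact blocked_at n hn V 3 4 (by omega) (by omega) hstpos
            (by rw [p4, ht3, e6]; rfl)
        · exact blocked_at n hn V 4 5 (by omega) (by omega) hstpos
            (by rw [p5, ht4]; rfl)
      · rintro ⟨c', _, hstne, _, _⟩
        apply hstne
        show confSt n (tc n 6 5) i = 0
        rw [confSt]
        by_cases hin : i + 1 = n
        · rw [if_pos hin]
        · rw [if_neg hin]
          have : tc n 6 5 i = 6 := by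
            simp only [tc, tau]; split_ifs <;> omega
          rw [this]
          norm_num
    · rintro ⟨c', hlt, -⟩
      exact hi hlt

/-- For every `n ≥ 7`, the line-rotating Turning Machine `L⁶_n` has a
reachable permanently blocked configuration; consequently it does not compute its target
configuration (a full `2π` line rotation is impossible). -/
theorem no_two_pi_rotation (n : ℕ) (hn : 7 ≤ n) :
    (∃ c : Config n, Reachable (lineInit n 6) c ∧ PermBlocked c) ∧
    ∀ ct : Config n,
      (∀ i < n, ct.st i = 0) → (∀ i < n, ct.pos i = zsmulPt (i : ℤ) (rot^[6] (1, 0))) →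
      ¬ Computes (lineInit n 6) ct := by
  have hreach := reach_final n hn
  have hperm := blockedCfg_perm n hn
  refine ⟨⟨_, hreach, hperm⟩, ?_⟩
  intro ct hst _ hComp
  obtain ⟨-, hAll⟩ := hComp
  have hterm : Terminal (conf n (tc n 6 5) (valid6 n 5 hn le_rfl)) := hperm.2
  have h := hAll _ hreach hterm 0 (by omega)
  have h0 : (conf n (tc n 6 5) (valid6 n 5 hn le_rfl)).st 0 = 0 :=
    h.1.trans (hst 0 (by omega))
  have ht0 : tc n 6 5 0 = 0 := by
    simp only [tc, tau]; split_ifs <;> first | omega | simp_all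
  rw [show (conf n (tc n 6 5) (valid6 n 5 hn le_rfl)).st 0 = confSt n (tc n 6 5) 0 from rfl,
    confSt, if_neg (by omega), ht0] at h0
  norm_num at h0


end TuringMachineFolding
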